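/- arXiv:2004.11501 — 5 statements merged into one kernel-verified Lean document; each statement's English description precedes it below -/
import Mathlib

section
/- Let a < b and g : [a,b] → ℂ be integrable. If there exist θ₀ ∈ ℝ and η with 0 ≤ η < π/2 such that |arg(g(y)·e^{-iθ₀})| ≤ η for all y ∈ [a,b], then ∫_a^b g(y) dy = ρ·e^{i(θ₀+φ)} for some real numbers ρ and φ satisfying ρ ≥ cos(η)·∫_a^b |g(y)| dy and |φ| ≤ η. -/
open MeasureTheory Real Set

theorem stmt_0 (a b : ℝ) (hab : a < b) (g : ℝ → ℂ)
    (hg : IntegrableOn g (Icc a b))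
    (θ₀ η : ℝ) (hη0 : 0 ≤ η) (hη : η < π / 2)
    (harg : ∀ y ∈ Icc a b, |Complex.arg (g y * Complex.exp (-θ₀ * Complex.I))| ≤ η) :
    ∃ ρ φ : ℝ, (∫ y in a..b, g y) = ρ * Complex.exp ((θ₀ + φ) * Complex.I) ∧
      Real.cos η * (∫ y in a..b, ‖g y‖) ≤ ρ ∧ |φ| ≤ η := by
  have hab' : a ≤ b := hab.le
  set h : ℝ → ℂ := fun y => g y * Complex.exp (-θ₀ * Complex.I) with hh
  have hπ : η ≤ π := le_trans hη.le (by linarith [Real.pi_pos])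
  have hcosη : 0 < Real.cos η :=
    Real.cos_pos_of_mem_Ioo ⟨by linarith [Real.pi_pos], hη⟩
  have habs_eq : ∀ y, ‖h y‖ = ‖g y‖ := by
    intro y
    simp [hh, map_mul, Complex.norm_exp]
  have hgIoc : IntegrableOn g (Ioc a b) := hg.mono_set Ioc_subset_Icc_self
  have hhIoc : IntegrableOn h (Ioc a b) := hgIoc.mul_const _
  have hhreInt : IntegrableOn (fun y => (h y).re) (Ioc a b) := by
    exact (Complex.reCLM : ℂ →L[ℝ] ℝ).integrable_comp hhIoc
  have hgabsInt : IntegrableOn (fun y => ‖g y‖) (Ioc a b) := by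
    exact hgIoc.norm
  -- pointwise lower bound on real part
  have hpt : ∀ y ∈ Ioc a b, Real.cos η * ‖g y‖ ≤ (h y).re := by
    intro y hy
    have hy' := harg y (Ioc_subset_Icc_self hy)
    by_cases hz : h y = 0
    · have : g y = 0 := by
        have := Complex.exp_ne_zero (-θ₀ * Complex.I)
        simpa [hh, this] using hz
      simp [hz, this]
    · have hcos : Real.cos η ≤ Real.cos ((h y).arg) := by
        rw [← Real.cos_abs ((h y).arg)]
        exact Real.cos_le_cos_of_nonneg_of_le_pi (abs_nonneg _) hπ hy'
      have hre : (h y).re = ‖h y‖ * Real.cos ((h y).arg) := by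
        rw [Complex.cos_arg hz, mul_div_cancel₀ _ (norm_ne_zero_iff.mpr hz)]
      rw [hre, ← habs_eq y, mul_comm (Real.cos η)]
      exact mul_le_mul_of_nonneg_left hcos (norm_nonneg _)
  set J : ℂ := ∫ y in Ioc a b, h y with hJ
  have hJre : J.re = ∫ y in Ioc a b, (h y).re := by
    have := integral_re hhIoc
    simpa using this.symm
  have hlow : Real.cos η * (∫ y in Ioc a b, ‖g y‖) ≤ J.re := by
    rw [hJre, ← integral_const_mul]
    exact setIntegral_mono_on (hgabsInt.const_mul _) hhreInt measurableSet_Ioc hpt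
  have hJle : ‖J‖ ≤ ∫ y in Ioc a b, ‖g y‖ := by
    calc ‖J‖ ≤ ∫ y in Ioc a b, ‖h y‖ := norm_integral_le_integral_norm h
    _ = ∫ y in Ioc a b, ‖g y‖ := by
        congr 1; ext y; rw [habs_eq]
  refine ⟨‖J‖, J.arg, ?_, ?_, ?_⟩
  · have hIJ : (∫ y in a..b, g y) = J * Complex.exp (θ₀ * Complex.I) := by
      rw [hJ, intervalIntegral.integral_of_le hab', ← integral_mul_const]
      congr 1; ext y
      show g y = g y * Complex.exp (-θ₀ * Complex.I) * Complex.exp (θ₀ * Complex.I)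
      rw [mul_assoc, ← Complex.exp_add]
      norm_num
    have key : J * Complex.exp (θ₀ * Complex.I) =
        (‖J‖ : ℂ) * Complex.exp ((θ₀ + J.arg) * Complex.I) := by
      conv_lhs => rw [← Complex.norm_mul_exp_arg_mul_I J]
      rw [mul_assoc, ← Complex.exp_add]
      congr 2
      ring
    rw [hIJ, key]
  · rw [intervalIntegral.integral_of_le hab']
    exact le_trans hlow (Complex.re_le_norm J)
  · by_cases hJ0 : J = 0
    · simp [hJ0, Complex.arg_zero, hη0]
    · by_contra hcon
      push_neg at hcon
      have h1 : Real.cos |J.arg| < Real.cos η :=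
        Real.strictAntiOn_cos ⟨hη0, hπ⟩ ⟨abs_nonneg _, Complex.abs_arg_le_pi J⟩ hcon
      have h2 : J.re = ‖J‖ * Real.cos (J.arg) := by
        rw [Complex.cos_arg hJ0, mul_div_cancel₀ _ (norm_ne_zero_iff.mpr hJ0)]
      have h3 : Real.cos η * ‖J‖ ≤ ‖J‖ * Real.cos (J.arg) := by
        rw [← h2]
        exact le_trans (mul_le_mul_of_nonneg_left hJle hcosη.le) hlow
      rw [Real.cos_abs] at h1
      have hJpos : 0 < ‖J‖ := by
        simpa [norm_pos_iff] using hJ0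
      nlinarith
end

section
/- Let τ ≥ 3, let δ = (log log τ + a)/log τ with a ≥ log 6, and let ν ∈ [2,3]. Define Π(x) = ∫₁^x (1 - 1/u)/log u du + R(x), where R(x) = sin(τ log x) for τ^{1+δ} < x ≤ τ^{ν} and R(x) = 0 otherwise. Then Π is non-decreasing on (1, ∞). -/
open Real Set

theorem stmt_3 (τ a δ ν : ℝ) (hτ : 3 ≤ τ) (ha : Real.log 6 ≤ a)
    (hδ : δ = (Real.log (Real.log τ) + a) / Real.log τ)
    (hν1 : 2 ≤ ν) (hν2 : ν ≤ 3)
    (hint1 : ∃ n : ℤ, (1 + δ) * τ * Real.log τ = 2 * π * n)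
    (hint2 : ∃ n : ℤ, ν * τ * Real.log τ = 2 * π * n)
    (R : ℝ → ℝ)
    (hR : ∀ x, R x = if τ ^ (1 + δ) < x ∧ x ≤ τ ^ ν then Real.sin (τ * Real.log x) else 0)
    (Pi : ℝ → ℝ)
    (hPi : ∀ x, Pi x = (∫ u in (1:ℝ)..x, (1 - 1 / u) / Real.log u) + R x) :
    MonotoneOn Pi (Set.Ioi 1) := by
  have hτ0 : (0:ℝ) < τ := by linarith
  have hτ1 : (1:ℝ) < τ := by linarith
  have hlogτ : 1 < Real.log τ := by
    have h3 : (1:ℝ) < Real.log 3 := by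
      rw [Real.lt_log_iff_exp_lt (by norm_num)]
      calc Real.exp 1 < 2.7182818286 := Real.exp_one_lt_d9
        _ < 3 := by norm_num
    exact lt_of_lt_of_le h3 (Real.log_le_log (by norm_num) hτ)
  have hlogτ0 : 0 < Real.log τ := by linarith
  have ha0 : 0 < a := lt_of_lt_of_le (Real.log_pos (by norm_num)) ha
  have hδ0 : 0 < δ := by
    have hll : 0 < Real.log (Real.log τ) := Real.log_pos hlogτ
    rw [hδ]
    exact div_pos (by linarith) hlogτ0
  set f : ℝ → ℝ := fun u => (1 - 1 / u) / Real.log u with hf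
  set F : ℝ → ℝ := fun x => ∫ u in (1:ℝ)..x, f u with hFdef
  set A : ℝ := τ ^ (1 + δ) with hAdef
  set B : ℝ := τ ^ ν with hBdef
  have hA3 : 3 ≤ A := by
    calc (3:ℝ) ≤ τ := hτ
      _ = τ ^ (1:ℝ) := (Real.rpow_one τ).symm
      _ ≤ τ ^ (1 + δ) := Real.rpow_le_rpow_of_exponent_le hτ1.le (by linarith)
  have hA1 : 1 < A := by linarith
  -- basic properties of f
  have hf_nonneg : ∀ u : ℝ, 1 ≤ u → 0 ≤ f u := by
    intro u hu
    rcases eq_or_lt_of_le hu with h | h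
    · simp [hf, ← h]
    · have h1 : 0 < Real.log u := Real.log_pos h
      have h2 : 1 / u < 1 := by
        rw [div_lt_one (by linarith)]; linarith
      exact div_nonneg (by linarith) h1.le
  have hf_le_one : ∀ u : ℝ, 1 ≤ u → f u ≤ 1 := by
    intro u hu
    rcases eq_or_lt_of_le hu with h | h
    · simp [hf, ← h]
    · have h1 : 0 < Real.log u := Real.log_pos h
      rw [hf]
      rw [div_le_one h1]
      have h2 : Real.log u⁻¹ ≤ u⁻¹ - 1 := Real.log_le_sub_one_of_pos (by positivity)
      rw [Real.log_inv] at h2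
      rw [one_div]
      linarith
  have hf_meas : Measurable f :=
    (measurable_const.sub (measurable_const.div measurable_id)).div Real.measurable_log
  -- interval integrability of f on intervals within [1, ∞)
  have hInt : ∀ x y : ℝ, 1 ≤ x → 1 ≤ y → IntervalIntegrable f MeasureTheory.volume x y := by
    intro x y hx hy
    rw [intervalIntegrable_iff]
    apply MeasureTheory.Measure.integrableOn_of_bounded (M := 1)
    · exact measure_Ioc_lt_top.ne
    · exact hf_meas.aestronglyMeasurable
    · apply MeasureTheory.ae_restrict_of_forall_mem measurableSet_uIoc
      intro u hu
      have h1 : 1 ≤ u := by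
        rcases hu with ⟨h1, _⟩
        have : min x y ≤ u := h1.le
        exact le_trans (le_min hx hy) this
      rw [Real.norm_eq_abs, abs_le]
      exact ⟨by linarith [hf_nonneg u h1], hf_le_one u h1⟩
  -- F has derivative f x at every x > 1
  have hFd : ∀ x : ℝ, 1 < x → HasDerivAt F (f x) x := by
    intro x hx
    apply intervalIntegral.integral_hasDerivAt_right (hInt 1 x le_rfl hx.le)
    · exact hf_meas.stronglyMeasurable.stronglyMeasurableAtFilter
    · have hx0 : x ≠ 0 := by linarith
      have hlx : Real.log x ≠ 0 := (Real.log_pos hx).ne'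
      exact ((continuousAt_const.sub (continuousAt_const.div continuousAt_id hx0)).div
        (Real.continuousAt_log hx0) hlx)
  -- F is monotone on [1, ∞)
  have hF_mono : ∀ x y : ℝ, 1 ≤ x → x ≤ y → F x ≤ F y := by
    intro x y hx hxy
    have hy : (1:ℝ) ≤ y := le_trans hx hxy
    have hadd := intervalIntegral.integral_add_adjacent_intervals
      (hInt 1 x le_rfl hx) (hInt x y hx hy)
    have hnn : 0 ≤ ∫ u in x..y, f u :=
      intervalIntegral.integral_nonneg hxy (fun u hu => hf_nonneg u (le_trans hx hu.1))
    rw [hFdef]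
    simp only
    rw [← hadd]
    linarith
  -- G : F plus the oscillating term
  set G : ℝ → ℝ := fun x => F x + Real.sin (τ * Real.log x) with hGdef
  have hGd : ∀ x : ℝ, 1 < x → HasDerivAt G (f x + Real.cos (τ * Real.log x) * (τ * x⁻¹)) x := by
    intro x hx
    have hx0 : x ≠ 0 := by linarith
    have h1 : HasDerivAt (fun x : ℝ => τ * Real.log x) (τ * x⁻¹) x :=
      (Real.hasDerivAt_log hx0).const_mul τ
    have h2 : HasDerivAt (fun x : ℝ => Real.sin (τ * Real.log x))
        (Real.cos (τ * Real.log x) * (τ * x⁻¹)) x :=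
      h1.sin
    exact (hFd x hx).add h2
  -- key bound : τ / A ≤ 1 / (6 * log τ)
  have hτA : τ / A ≤ 1 / (6 * Real.log τ) := by
    have hδl : δ * Real.log τ = Real.log (Real.log τ) + a := by
      rw [hδ]; field_simp
    have h1 : τ / A = τ ^ (-δ) := by
      rw [hAdef, show -δ = 1 - (1 + δ) by ring, Real.rpow_sub hτ0, Real.rpow_one]
    have h2 : τ ^ (-δ) = Real.exp (-a) / Real.log τ := by
      rw [Real.rpow_def_of_pos hτ0, mul_comm, neg_mul, hδl, neg_add, Real.exp_add]
      rw [Real.exp_neg (Real.log (Real.log τ)), Real.exp_log hlogτ0]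
      ring
    have h3 : Real.exp (-a) ≤ 1 / 6 := by
      calc Real.exp (-a) ≤ Real.exp (-Real.log 6) := Real.exp_le_exp.mpr (by linarith)
        _ = 1 / 6 := by rw [Real.exp_neg, Real.exp_log (by norm_num)]; norm_num
    rw [h1, h2]
    rw [div_le_div_iff₀ hlogτ0 (by positivity)]
    calc Real.exp (-a) * (6 * Real.log τ) ≤ (1/6) * (6 * Real.log τ) := by
          apply mul_le_mul_of_nonneg_right h3 (by positivity)
      _ = 1 * Real.log τ := by ring
  -- G is monotone on [A, B]
  have hG_mono : MonotoneOn G (Set.Icc A B) := by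
    apply monotoneOn_of_deriv_nonneg (convex_Icc A B)
    · intro x hx
      exact ((hGd x (lt_of_lt_of_le hA1 hx.1)).continuousAt).continuousWithinAt
    · rw [interior_Icc]
      intro x hx
      exact ((hGd x (lt_of_lt_of_le hA1 hx.1.le)).differentiableAt).differentiableWithinAt
    · rw [interior_Icc]
      intro x hx
      have hx1 : 1 < x := lt_of_le_of_lt hA1.le hx.1
      rw [(hGd x hx1).deriv]
      -- bound f x from below
      have hx3 : 3 ≤ x := le_trans hA3 hx.1.le
      have hlogx : 0 < Real.log x := Real.log_pos hx1
      have hlogxB : Real.log x ≤ 3 * Real.log τ := by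
        have : Real.log x ≤ Real.log B := Real.log_le_log (by linarith) hx.2.le
        rw [hBdef, Real.log_rpow hτ0] at this
        nlinarith
      have hfx : 1 / (6 * Real.log τ) ≤ f x := by
        rw [hf]
        rw [div_le_div_iff₀ (by positivity) hlogx]
        have hux : 1 / x ≤ 1 / 3 := by
          rw [div_le_div_iff₀ (by linarith) (by norm_num)]; linarith
        nlinarith
      -- bound the cosine term
      have hcos : -(1 / (6 * Real.log τ)) ≤ Real.cos (τ * Real.log x) * (τ * x⁻¹) := by
        have ht0 : 0 ≤ τ * x⁻¹ := by positivity
        have h1 : -(τ * x⁻¹) ≤ Real.cos (τ * Real.log x) * (τ * x⁻¹) := by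
          nlinarith [Real.neg_one_le_cos (τ * Real.log x)]
        have h2 : τ * x⁻¹ ≤ τ / A := by
          rw [div_eq_mul_inv]
          apply mul_le_mul_of_nonneg_left _ hτ0.le
          apply inv_anti₀ (by linarith) hx.1.le
        linarith
      linarith
  -- vanishing of sin at endpoints
  have hsinA : Real.sin (τ * Real.log A) = 0 := by
    obtain ⟨n, hn⟩ := hint1
    have h1 : τ * Real.log A = (2 * n : ℤ) * π := by
      rw [hAdef, Real.log_rpow hτ0]
      push_cast
      nlinarith [hn]
    rw [h1]
    exact Real.sin_int_mul_pi (2 * n)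
  have hsinB : Real.sin (τ * Real.log B) = 0 := by
    obtain ⟨n, hn⟩ := hint2
    have h1 : τ * Real.log B = (2 * n : ℤ) * π := by
      rw [hBdef, Real.log_rpow hτ0]
      push_cast
      nlinarith [hn]
    rw [h1]
    exact Real.sin_int_mul_pi (2 * n)
  -- expressing Pi via F and G
  have hPiF : ∀ x : ℝ, ¬(A < x ∧ x ≤ B) → Pi x = F x := by
    intro x hx
    rw [hPi, hR, if_neg hx, add_zero]
  have hPiG : ∀ x : ℝ, A < x ∧ x ≤ B → Pi x = G x := by
    intro x hx
    rw [hPi, hR, if_pos hx]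
  have hGA : G A = F A := by rw [hGdef]; simp only; rw [hsinA, add_zero]
  have hGB : G B = F B := by rw [hGdef]; simp only; rw [hsinB, add_zero]
  -- main case analysis
  intro x hx y hy hxy
  simp only [Set.mem_Ioi] at hx hy
  by_cases hxS : A < x ∧ x ≤ B
  · by_cases hyS : A < y ∧ y ≤ B
    · rw [hPiG x hxS, hPiG y hyS]
      exact hG_mono ⟨hxS.1.le, hxS.2⟩ ⟨hyS.1.le, hyS.2⟩ hxy
    · -- x in (A,B], y not; since A < x ≤ y we must have B < y
      have hBy : B < y := by
        by_contra h
        exact hyS ⟨lt_of_lt_of_le hxS.1 hxy, le_of_not_gt h⟩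
      have hAB : A ≤ B := le_trans hxS.1.le hxS.2
      rw [hPiG x hxS, hPiF y hyS]
      calc G x ≤ G B := hG_mono ⟨hxS.1.le, hxS.2⟩ ⟨hAB, le_rfl⟩ hxS.2
        _ = F B := hGB
        _ ≤ F y := hF_mono B y (by linarith) hBy.le
  · by_cases hyS : A < y ∧ y ≤ B
    · -- y in (A,B], x not; since x ≤ y ≤ B we must have x ≤ A
      have hxA : x ≤ A := by
        by_contra h
        exact hxS ⟨lt_of_not_ge h, le_trans hxy hyS.2⟩
      rw [hPiF x hxS, hPiG y hyS]
      calc F x ≤ F A := hF_mono x A hx.le hxA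
        _ = G A := hGA.symm
        _ ≤ G y := hG_mono ⟨le_rfl, le_trans hyS.1.le hyS.2⟩ ⟨hyS.1.le, hyS.2⟩ hyS.1.le
    · rw [hPiF x hxS, hPiF y hyS]
      exact hF_mono x y hx.le hxy
end

section
/- Let X₁, …, X_J be independent Bernoulli random variables where X_j has success probability q_j ∈ [0,1], let r₁, …, r_J be real numbers with |r_j| ≤ 1, and set X = Σ_{j=1}^J r_j X_j. If 0 ≤ v ≤ 2·Σ_{j=1}^J q_j(1 - q_j), then P(X ≥ E[X] + v) ≤ exp(−v² / (4·Σ_{j=1}^J q_j(1−q_j))). -/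
open MeasureTheory ProbabilityTheory Real

lemma exp_le_one_add_add_sq' {x : ℝ} (hx : x ≤ 1) : Real.exp x ≤ 1 + x + x ^ 2 := by
  rcases le_total (-1) x with h | h
  · have habs : |x| ≤ 1 := abs_le.2 ⟨h, hx⟩
    have hb := Real.exp_bound habs (n := 3) (by norm_num)
    have hsum : ∑ m ∈ Finset.range 3, x ^ m / m.factorial = 1 + x + x ^ 2 / 2 := by
      norm_num [Finset.sum_range_succ, Nat.factorial]
    rw [hsum] at hb
    have h1 : Real.exp x - (1 + x + x ^ 2 / 2) ≤ |x| ^ 3 * (4 / (6 * 3)) := by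
      have := (abs_le.1 hb).2
      simpa [Nat.factorial] using this
    have h2 : |x| ^ 3 ≤ x ^ 2 := by
      have : |x| ^ 3 = |x| * x ^ 2 := by rw [← sq_abs]; ring
      rw [this]
      nlinarith [sq_nonneg x, abs_nonneg x]
    nlinarith
  · have h1 : Real.exp x ≤ Real.exp (-1) := Real.exp_le_exp.2 h
    have h2 : Real.exp (-1) ≤ 1 / 2 := by
      rw [Real.exp_neg]
      rw [inv_le_comm₀ (Real.exp_pos 1) (by norm_num)]
      linarith [Real.add_one_le_exp 1]
    nlinarith [sq_nonneg (x + 1/2)]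

lemma bern_factor_bound {q s : ℝ} (hq0 : 0 ≤ q) (hq1 : q ≤ 1) (hs : |s| ≤ 1) :
    1 - q + q * Real.exp s ≤ Real.exp (q * s + q * (1 - q) * s ^ 2) := by
  obtain ⟨hs1, hs2⟩ := abs_le.1 hs
  have h1 : Real.exp (s * (1 - q)) ≤ 1 + s * (1 - q) + (s * (1 - q)) ^ 2 :=
    exp_le_one_add_add_sq' (by nlinarith)
  have h2 : Real.exp (-(s * q)) ≤ 1 + (-(s * q)) + (s * q) ^ 2 := by
    have := exp_le_one_add_add_sq' (x := -(s * q)) (by nlinarith)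
    simpa using this
  have key : q * Real.exp (s * (1 - q)) + (1 - q) * Real.exp (-(s * q))
      ≤ 1 + q * (1 - q) * s ^ 2 := by nlinarith
  have h3 : 1 + q * (1 - q) * s ^ 2 ≤ Real.exp (q * (1 - q) * s ^ 2) := by
    linarith [Real.add_one_le_exp (q * (1 - q) * s ^ 2)]
  have heq : 1 - q + q * Real.exp s =
      Real.exp (q * s) * (q * Real.exp (s * (1 - q)) + (1 - q) * Real.exp (-(s * q))) := by
    have e1 : Real.exp (q * s) * Real.exp (s * (1 - q)) = Real.exp s := by
      rw [← Real.exp_add]; ring_nf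
    have e2 : Real.exp (q * s) * Real.exp (-(s * q)) = 1 := by
      rw [← Real.exp_add]; ring_nf; exact Real.exp_zero
    nlinarith [e1, e2]
  rw [heq, Real.exp_add]
  have hposm := Real.exp_pos (q * s)
  calc Real.exp (q * s) * (q * Real.exp (s * (1 - q)) + (1 - q) * Real.exp (-(s * q)))
      ≤ Real.exp (q * s) * (1 + q * (1 - q) * s ^ 2) := by
        exact mul_le_mul_of_nonneg_left key hposm.le
    _ ≤ Real.exp (q * s) * Real.exp (q * (1 - q) * s ^ 2) :=
        mul_le_mul_of_nonneg_left h3 hposm.le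

lemma bern_int {Ω : Type*} [MeasurableSpace Ω] (μ : Measure Ω) [IsProbabilityMeasure μ]
    (X : Ω → ℝ) (q : ℝ) (hq0 : 0 ≤ q) (hmeas : Measurable X)
    (hbern : ∀ ω, X ω = 0 ∨ X ω = 1) (hlaw : μ {ω | X ω = 1} = ENNReal.ofReal q) :
    Integrable X μ ∧ ∫ ω, X ω ∂μ = q := by
  have hS : MeasurableSet {ω | X ω = 1} := hmeas (measurableSet_singleton 1)
  have hXind : X = Set.indicator {ω | X ω = 1} (fun _ => (1:ℝ)) := by
    funext ω
    rcases hbern ω with h | h <;> simp [Set.indicator_apply, h]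
  constructor
  · rw [hXind]; exact (integrable_const (1:ℝ)).indicator hS
  · rw [hXind, integral_indicator_const _ hS, measureReal_def, hlaw, ENNReal.toReal_ofReal hq0]
    simp

lemma bern_exp_int {Ω : Type*} [MeasurableSpace Ω] (μ : Measure Ω) [IsProbabilityMeasure μ]
    (X : Ω → ℝ) (q c : ℝ) (hq0 : 0 ≤ q) (hmeas : Measurable X)
    (hbern : ∀ ω, X ω = 0 ∨ X ω = 1) (hlaw : μ {ω | X ω = 1} = ENNReal.ofReal q) :
    Integrable (fun ω => Real.exp (c * X ω)) μ ∧
      ∫ ω, Real.exp (c * X ω) ∂μ = 1 - q + q * Real.exp c := by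
  obtain ⟨hXint, hXavg⟩ := bern_int μ X q hq0 hmeas hbern hlaw
  have heq : (fun ω => Real.exp (c * X ω)) = fun ω => 1 + (Real.exp c - 1) * X ω := by
    funext ω
    rcases hbern ω with h | h <;> simp [h]
  constructor
  · rw [heq]; exact (integrable_const 1).add (hXint.const_mul _)
  · rw [heq, integral_add (integrable_const 1) (hXint.const_mul _), integral_const,
      MeasureTheory.integral_const_mul, hXavg]
    simp; ring

theorem stmt_5 {Ω : Type*} [MeasurableSpace Ω] (μ : Measure Ω) [IsProbabilityMeasure μ]
    (J : ℕ) (X : Fin J → Ω → ℝ) (q r : Fin J → ℝ)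
    (hq0 : ∀ j, 0 ≤ q j) (hq1 : ∀ j, q j ≤ 1)
    (hmeas : ∀ j, Measurable (X j))
    (hindep : iIndepFun X μ)
    (hbern : ∀ j, ∀ ω, X j ω = 0 ∨ X j ω = 1)
    (hlaw : ∀ j, μ {ω | X j ω = 1} = ENNReal.ofReal (q j))
    (hr : ∀ j, |r j| ≤ 1)
    (v : ℝ) (hv0 : 0 ≤ v) (hv : v ≤ 2 * ∑ j, q j * (1 - q j)) :
    μ {ω | (μ[fun ω' => ∑ j, r j * X j ω']) + v ≤ ∑ j, r j * X j ω}
      ≤ ENNReal.ofReal (Real.exp (-v ^ 2 / (4 * ∑ j, q j * (1 - q j)))) := by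
  classical
  set σ2 := ∑ j, q j * (1 - q j) with hσ2def
  have hσ2nn : 0 ≤ σ2 :=
    Finset.sum_nonneg fun j _ => mul_nonneg (hq0 j) (by linarith [hq1 j])
  have hXint : ∀ j, Integrable (X j) μ := fun j =>
    (bern_int μ (X j) (q j) (hq0 j) (hmeas j) (hbern j) (hlaw j)).1
  have hXavg : ∀ j, ∫ ω, X j ω ∂μ = q j := fun j =>
    (bern_int μ (X j) (q j) (hq0 j) (hmeas j) (hbern j) (hlaw j)).2
  have hEf : (μ[fun ω' => ∑ j, r j * X j ω']) = ∑ j, r j * q j := by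
    rw [integral_finset_sum _ (fun j _ => ((hXint j).const_mul (r j)))]
    exact Finset.sum_congr rfl fun j _ => by
      rw [MeasureTheory.integral_const_mul, hXavg j]
  rcases eq_or_lt_of_le hσ2nn with hσ0 | hσpos
  · have hv' : v = 0 := le_antisymm (by linarith) hv0
    refine le_trans prob_le_one ?_
    rw [hv']
    norm_num
  · set t := v / (2 * σ2) with htdef
    have ht0 : 0 ≤ t := div_nonneg hv0 (by linarith)
    have ht1 : t ≤ 1 := by rw [div_le_one (by linarith)]; linarith
    set Y : Fin J → Ω → ℝ := fun j ω => r j * X j ω with hYdef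
    have hmeasY : ∀ j, Measurable (Y j) := fun j => (hmeas j).const_mul (r j)
    have hindepY : iIndepFun Y μ :=
      hindep.comp (fun j x => r j * x) (fun j => measurable_id.const_mul (r j))
    have hintY : ∀ j, Integrable (fun ω => Real.exp (t * Y j ω)) μ := by
      intro j
      have := (bern_exp_int μ (X j) (q j) (t * r j) (hq0 j) (hmeas j) (hbern j) (hlaw j)).1
      simpa [hYdef, mul_assoc] using this
    have hmgfY : ∀ j, mgf (Y j) μ t = 1 - q j + q j * Real.exp (t * r j) := by
      intro j
      have := (bern_exp_int μ (X j) (q j) (t * r j) (hq0 j) (hmeas j) (hbern j) (hlaw j)).2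
      simpa [mgf, hYdef, mul_assoc] using this
    have hfY : (fun ω => ∑ j, r j * X j ω) = ∑ j, Y j := by
      funext ω; simp [hYdef]
    have hintf : Integrable (fun ω => Real.exp (t * (∑ j, Y j) ω)) μ :=
      hindepY.integrable_exp_mul_sum hmeasY (fun j _ => hintY j)
    -- per-factor bound
    have hmgf_le : ∀ j, mgf (Y j) μ t
        ≤ Real.exp (t * (r j * q j) + t ^ 2 * (q j * (1 - q j))) := by
      intro j
      rw [hmgfY j]
      have hs : |t * r j| ≤ 1 := by
        rw [abs_mul, abs_of_nonneg ht0]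
        calc t * |r j| ≤ 1 * 1 := by
              apply mul_le_mul ht1 (hr j) (abs_nonneg _) zero_le_one
          _ = 1 := by norm_num
      refine le_trans (bern_factor_bound (hq0 j) (hq1 j) hs) ?_
      apply Real.exp_le_exp.2
      have hr2 : (r j) ^ 2 ≤ 1 := by
        have h := hr j; nlinarith [sq_abs (r j), abs_nonneg (r j)]
      have hq : 0 ≤ q j * (1 - q j) := mul_nonneg (hq0 j) (by linarith [hq1 j])
      nlinarith [sq_nonneg t, mul_nonneg hq (sq_nonneg t)]
    -- mgf of sum
    have hmgf_sum : mgf (∑ j, Y j) μ t = ∏ j, mgf (Y j) μ t :=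
      hindepY.mgf_sum hmeasY Finset.univ
    have hprod_le : ∏ j, mgf (Y j) μ t ≤ Real.exp (t * (∑ j, r j * q j) + t ^ 2 * σ2) := by
      calc ∏ j, mgf (Y j) μ t
          ≤ ∏ j, Real.exp (t * (r j * q j) + t ^ 2 * (q j * (1 - q j))) :=
            Finset.prod_le_prod (fun j _ => mgf_nonneg) (fun j _ => hmgf_le j)
        _ = Real.exp (∑ j, (t * (r j * q j) + t ^ 2 * (q j * (1 - q j)))) :=
            (Real.exp_sum _ _).symm
        _ = Real.exp (t * (∑ j, r j * q j) + t ^ 2 * σ2) := by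
            rw [Finset.sum_add_distrib, ← Finset.mul_sum, ← Finset.mul_sum, hσ2def]
    -- Chernoff
    have hch := measure_ge_le_exp_mul_mgf (μ := μ) (X := ∑ j, Y j)
      ((μ[fun ω' => ∑ j, r j * X j ω']) + v) ht0 hintf
    have hsetEq : {ω | (μ[fun ω' => ∑ j, r j * X j ω']) + v ≤ ∑ j, r j * X j ω}
        = {ω | (μ[fun ω' => ∑ j, r j * X j ω']) + v ≤ (∑ j, Y j) ω} := by
      ext ω; simp [hYdef]
    rw [hsetEq, ← ENNReal.ofReal_toReal (measure_ne_top μ _)]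
    refine ENNReal.ofReal_le_ofReal (le_trans hch ?_)
    rw [hmgf_sum, hEf]
    have hfinal : Real.exp (-t * (∑ j, r j * q j + v)) *
        Real.exp (t * (∑ j, r j * q j) + t ^ 2 * σ2)
        = Real.exp (-v ^ 2 / (4 * σ2)) := by
      rw [← Real.exp_add]
      congr 1
      rw [htdef]
      field_simp
      ring
    calc Real.exp (-t * (∑ j, r j * q j + v)) * ∏ j, mgf (Y j) μ t
        ≤ Real.exp (-t * (∑ j, r j * q j + v)) *
            Real.exp (t * (∑ j, r j * q j) + t ^ 2 * σ2) :=
          mul_le_mul_of_nonneg_left hprod_le (Real.exp_pos _).le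
      _ = Real.exp (-v ^ 2 / (4 * σ2)) := hfinal
end

section
/- Let dP be the measure (1 - 1/u)/log u · du on (1, ∞). Then the multiplicative-convolution exponential of dP equals δ₁ + du, i.e. exp*(dP) = δ₁ + Lebesgue measure on (1,∞), where δ₁ is the Dirac measure at 1. Equivalently, for Re s > 1, exp(∫₁^∞ x^{-s}·(1 - 1/x)/log x dx) = s/(s - 1). -/
open MeasureTheory Set Real

theorem stmt_7 (s : ℝ) (hs : 1 < s) :
    Real.exp (∫ x in Set.Ioi (1:ℝ), x ^ (-s) * (1 - 1 / x) / Real.log x) = s / (s - 1) := by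
  have hs0 : 0 < s - 1 := by linarith
  set μ := ((volume : Measure ℝ).restrict (Ioi 1)).prod
      ((volume : Measure ℝ).restrict (Ioc s (s+1))) with hμ
  have hprod : μ = (volume.prod volume).restrict ((Ioi (1:ℝ)) ×ˢ (Ioc s (s+1))) := by
    rw [hμ, Measure.prod_restrict]
  -- Step 1: pointwise identity on Ioi 1
  have key : ∀ x : ℝ, x ∈ Ioi (1:ℝ) →
      x ^ (-s) * (1 - 1 / x) / Real.log x = ∫ t in Ioc s (s + 1), x ^ (-t) := by
    intro x hx
    have hx1 : (1:ℝ) < x := hx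
    have hx0 : (0:ℝ) < x := lt_trans one_pos hx1
    have hlog : 0 < Real.log x := Real.log_pos hx1
    have hderiv : ∀ t ∈ Set.uIcc s (s+1),
        HasDerivAt (fun t => -Real.exp (-t * Real.log x) / Real.log x) (x ^ (-t)) t := by
      intro t _
      have h1 : HasDerivAt (fun t : ℝ => -t * Real.log x) (-Real.log x) t := by
        simpa using (hasDerivAt_id t).neg.mul_const (Real.log x)
      have h2 : HasDerivAt (fun t => -Real.exp (-t * Real.log x) / Real.log x)
          (-(Real.exp (-t * Real.log x) * -Real.log x) / Real.log x) t :=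
        (h1.exp).neg.div_const (Real.log x)
      convert h2 using 1
      rw [Real.rpow_def_of_pos hx0]
      field_simp [hlog.ne']
    have hcont : IntervalIntegrable (fun t : ℝ => x ^ (-t)) volume s (s+1) := by
      apply Continuous.intervalIntegrable
      have : Continuous (fun t : ℝ => Real.exp (Real.log x * (-t))) :=
        Real.continuous_exp.comp (continuous_const.mul continuous_neg)
      exact this.congr (fun t => by rw [Real.rpow_def_of_pos hx0])
    have heval := intervalIntegral.integral_eq_sub_of_hasDerivAt hderiv hcont
    rw [intervalIntegral.integral_of_le (by linarith : s ≤ s + 1)] at heval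
    rw [heval]
    have e1 : Real.exp (-(s+1) * Real.log x) = x ^ (-(s+1)) := by
      rw [Real.rpow_def_of_pos hx0]; ring_nf
    have e2 : Real.exp (-s * Real.log x) = x ^ (-s) := by
      rw [Real.rpow_def_of_pos hx0]; ring_nf
    rw [e1, e2]
    have e3 : x ^ (-(s+1)) = x ^ (-s) * x⁻¹ := by
      rw [← Real.rpow_neg_one x, ← Real.rpow_add hx0]; ring_nf
    rw [e3]
    field_simp
    ring
  -- Step 2: measurability and integrability on the product
  have meas : AEStronglyMeasurable (fun p : ℝ × ℝ => p.1 ^ (-p.2)) μ := by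
    have hg : Measurable (fun p : ℝ × ℝ => Real.exp (Real.log p.1 * (-p.2))) :=
      Real.measurable_exp.comp ((Real.measurable_log.comp measurable_fst).mul measurable_snd.neg)
    refine (hg.aestronglyMeasurable).congr ?_
    rw [hprod]
    filter_upwards [ae_restrict_mem (measurableSet_Ioi.prod measurableSet_Ioc)] with p hp
    have hx0 : (0:ℝ) < p.1 := lt_trans one_pos hp.1
    rw [Real.rpow_def_of_pos hx0]
  have hint_s : IntegrableOn (fun x : ℝ => x ^ (-s)) (Ioi 1) volume :=
    integrableOn_Ioi_rpow_of_lt (by linarith) one_pos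
  have hbound : Integrable (fun p : ℝ × ℝ => p.1 ^ (-s)) μ := by
    have : Integrable (fun p : ℝ × ℝ => p.1 ^ (-s) * (1:ℝ)) μ :=
      Integrable.mul_prod hint_s (integrable_const 1)
    simpa using this
  have hInt : Integrable (Function.uncurry fun x t : ℝ => x ^ (-t)) μ := by
    refine hbound.mono meas ?_
    rw [hprod]
    filter_upwards [ae_restrict_mem (measurableSet_Ioi.prod measurableSet_Ioc)] with p hp
    obtain ⟨hp1, hp2⟩ := hp
    have hx1 : (1:ℝ) < p.1 := hp1
    have hx0 : (0:ℝ) < p.1 := lt_trans one_pos hx1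
    have h1 : Function.uncurry (fun x t : ℝ => x ^ (-t)) p = p.1 ^ (-p.2) := rfl
    rw [h1, Real.norm_eq_abs, Real.norm_eq_abs, abs_of_nonneg (Real.rpow_nonneg hx0.le _),
      abs_of_nonneg (Real.rpow_nonneg hx0.le _)]
    exact Real.rpow_le_rpow_of_exponent_le hx1.le (by simpa using hp2.1.le)
  have swap := integral_integral_swap hInt
  -- Step 3: compute
  have inner : ∀ t : ℝ, t ∈ Ioc s (s+1) → (∫ x in Ioi (1:ℝ), x ^ (-t)) = (t - 1)⁻¹ := by
    intro t ht
    have ht1 : 1 < t := lt_trans hs ht.1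
    rw [integral_Ioi_rpow_of_lt (by linarith) one_pos, Real.one_rpow]
    rw [inv_eq_one_div, div_eq_div_iff (ne_of_lt (by linarith)) (ne_of_gt (by linarith))]
    ring
  calc Real.exp (∫ x in Set.Ioi (1:ℝ), x ^ (-s) * (1 - 1 / x) / Real.log x)
      = Real.exp (∫ x in Set.Ioi (1:ℝ), ∫ t in Ioc s (s+1), x ^ (-t)) := by
        rw [setIntegral_congr_fun measurableSet_Ioi key]
    _ = Real.exp (∫ t in Ioc s (s+1), ∫ x in Ioi (1:ℝ), x ^ (-t)) := by rw [swap]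
    _ = Real.exp (∫ t in Ioc s (s+1), (t - 1)⁻¹) := by
        rw [setIntegral_congr_fun measurableSet_Ioc inner]
    _ = s / (s - 1) := by
        rw [← intervalIntegral.integral_of_le (by linarith : s ≤ s + 1)]
        have h1 : (∫ t in s..(s+1), (t-1)⁻¹) = ∫ u in (s-1)..(s+1-1), u⁻¹ := by
          simpa using intervalIntegral.integral_comp_sub_right (fun u => u⁻¹) 1
        rw [h1]
        have h0 : (0:ℝ) ∉ Set.uIcc (s-1) (s+1-1) := by
          rw [Set.uIcc_of_le (by linarith)]
          intro h
          exact absurd h.1 (by linarith)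
        have h2 := integral_one_div (a := s-1) (b := s+1-1) h0
        simp only [one_div] at h2
        rw [h2, Real.exp_log (div_pos (by linarith) (by linarith))]
        congr 1 <;> ring
end

section
/- Let a₁ = log(80/π) and suppose (τ_k)_{k≥0} satisfies τ₀ ≥ 3 and τ_{k+1} > (2τ_k)^5. Let (β_k)_{k≥0} be any sequence of reals. Then there exists a sequence (ε_k)_{k≥0} with 0 ≤ ε_k < 2π/τ_k such that, setting ε = Σ_{k≥0} ε_k, for every k one has τ_k(log(80/π) + ε) ∈ β_k + 2πℤ + O(τ_k^{−4}), i.e. the distance from τ_k(log(80/π)+ε) to β_k + 2πℤ is O(τ_k^{−4}). -/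
open Real

noncomputable def fstep (τ β : ℕ → ℝ) (k : ℕ) (s : ℝ) : ℝ :=
  Int.fract ((β k - τ k * s) / (2 * π)) * (2 * π) / τ k

noncomputable def Spart (τ β : ℕ → ℝ) : ℕ → ℝ
  | 0 => Real.log (80 / π)
  | k + 1 => Spart τ β k + fstep τ β k (Spart τ β k)

theorem stmt_16 (τ : ℕ → ℝ) (h0 : 3 ≤ τ 0)
    (hgrow : ∀ k, (2 * τ k) ^ 5 < τ (k + 1))
    (β : ℕ → ℝ) :
    ∃ ε : ℕ → ℝ, Summable ε ∧
      (∀ k, 0 ≤ ε k ∧ ε k < 2 * π / τ k) ∧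
      ∃ C : ℝ, ∀ k, ∃ n : ℤ,
        |τ k * (Real.log (80 / π) + ∑' j, ε j) - β k - 2 * π * n| ≤ C * (τ k) ^ (-4 : ℝ) := by
  have hπ : (0:ℝ) < π := Real.pi_pos
  have h3 : ∀ k, 3 ≤ τ k := by
    intro k
    induction k with
    | zero => exact h0
    | succ k ih =>
      have h6 : (6:ℝ)^5 ≤ (2 * τ k)^5 := by
        apply pow_le_pow_left₀ (by norm_num) (by linarith)
      have := hgrow k
      norm_num at h6
      linarith
  have hτpos : ∀ k, 0 < τ k := fun k => lt_of_lt_of_le (by norm_num) (h3 k)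
  have hdouble : ∀ k, 2 * τ k ≤ τ (k + 1) := by
    intro k
    have h1 : 2 * τ k ≤ (2 * τ k)^5 := le_self_pow₀ (by linarith [h3 k]) (by norm_num)
    linarith [hgrow k]
  have hgeo : ∀ k n, τ k * 2 ^ n ≤ τ (k + n) := by
    intro k n
    induction n with
    | zero => simp
    | succ n ih =>
      have h2 := hdouble (k + n)
      calc τ k * 2 ^ (n + 1) = 2 * (τ k * 2 ^ n) := by ring
        _ ≤ 2 * τ (k + n) := by linarith
        _ ≤ τ (k + n + 1) := h2
  set ε : ℕ → ℝ := fun k => fstep τ β k (Spart τ β k) with hεdef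
  have hbd : ∀ k, 0 ≤ ε k ∧ ε k < 2 * π / τ k := by
    intro k
    have hfr0 : 0 ≤ Int.fract ((β k - τ k * Spart τ β k) / (2 * π)) := Int.fract_nonneg _
    have hfr1 : Int.fract ((β k - τ k * Spart τ β k) / (2 * π)) < 1 := Int.fract_lt_one _
    constructor
    · exact div_nonneg (mul_nonneg hfr0 (by positivity)) (hτpos k).le
    · show Int.fract _ * (2 * π) / τ k < 2 * π / τ k
      rw [div_lt_div_iff₀ (hτpos k) (hτpos k)]
      nlinarith [mul_lt_mul_of_pos_right hfr1 (mul_pos (mul_pos two_pos hπ) (hτpos k))]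
  -- partial sum identity
  have hS : ∀ k, Spart τ β k = Real.log (80 / π) + ∑ j ∈ Finset.range k, ε j := by
    intro k
    induction k with
    | zero => simp [Spart]
    | succ k ih =>
      rw [Finset.sum_range_succ, ← add_assoc, ← ih]
      rfl
  -- exactness: τ k * Spart (k+1) = β k - 2π * ⌊x k⌋
  have hexact : ∀ k, τ k * Spart τ β (k + 1)
      = β k - 2 * π * ⌊(β k - τ k * Spart τ β k) / (2 * π)⌋ := by
    intro k
    have hτ := (hτpos k).ne'
    have h2π : (2 * π) ≠ 0 := by positivity
    rw [Spart]
    show τ k * (Spart τ β k + Int.fract ((β k - τ k * Spart τ β k) / (2 * π)) * (2 * π) / τ k) = _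
    rw [Int.fract]
    field_simp
    ring
  -- summability
  have hle : ∀ k, ε k ≤ 2 * π / τ k := fun k => (hbd k).2.le
  have hεle : ∀ n, ε n ≤ (2 * π / 3) * (1 / 2) ^ n := by
    intro n
    have h1 : (3:ℝ) * 2 ^ n ≤ τ n := by
      have := hgeo 0 n
      simp only [Nat.zero_add] at this
      nlinarith [pow_pos (show (0:ℝ) < 2 by norm_num) n, h0]
    have h2 : 2 * π / τ n ≤ 2 * π / (3 * 2 ^ n) := by
      apply div_le_div_of_nonneg_left (by positivity) (by positivity) h1
    refine (hle n).trans (h2.trans_eq ?_)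
    rw [div_pow, one_pow]
    field_simp
  have hsum : Summable ε := by
    apply Summable.of_nonneg_of_le (fun n => (hbd n).1) hεle
    exact (summable_geometric_two).mul_left _
  refine ⟨ε, hsum, hbd, π, ?_⟩
  intro k
  refine ⟨-⌊(β k - τ k * Spart τ β k) / (2 * π)⌋, ?_⟩
  -- tail bound
  have htail_sum : Summable (fun n => ε (n + (k + 1))) := by
    exact (summable_nat_add_iff (k+1)).2 hsum
  have htail_nonneg : 0 ≤ ∑' n, ε (n + (k + 1)) :=
    tsum_nonneg fun n => (hbd _).1
  have htail_le : ∑' n, ε (n + (k + 1)) ≤ 4 * π / τ (k + 1) := by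
    have hb : ∀ n, ε (n + (k + 1)) ≤ (2 * π / τ (k + 1)) * (1 / 2) ^ n := by
      intro n
      have h1 : τ (k + 1) * 2 ^ n ≤ τ (n + (k + 1)) := by
        have := hgeo (k + 1) n
        rwa [Nat.add_comm (k+1) n] at this
      have h2 : 2 * π / τ (n + (k + 1)) ≤ 2 * π / (τ (k + 1) * 2 ^ n) := by
        exact div_le_div_of_nonneg_left (by positivity) (mul_pos (hτpos _) (by positivity)) h1
      refine (hle _).trans (h2.trans_eq ?_)
      rw [div_pow, one_pow]
      have := (hτpos (k+1)).ne'
      field_simp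
    have hsg : Summable (fun n : ℕ => (2 * π / τ (k + 1)) * (1 / 2) ^ n) :=
      (summable_geometric_two).mul_left _
    calc ∑' n, ε (n + (k + 1)) ≤ ∑' n : ℕ, (2 * π / τ (k + 1)) * (1 / 2) ^ n :=
          Summable.tsum_le_tsum hb htail_sum hsg
      _ = (2 * π / τ (k + 1)) * 2 := by
          rw [tsum_mul_left, tsum_geometric_two]
      _ = 4 * π / τ (k + 1) := by ring
  -- decompose tsum
  have hdecomp : ∑' j, ε j = ∑ j ∈ Finset.range (k + 1), ε j + ∑' n, ε (n + (k + 1)) :=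
    (Summable.sum_add_tsum_nat_add (k + 1) hsum).symm
  have hmain : τ k * (Real.log (80 / π) + ∑' j, ε j) - β k
      - 2 * π * (-⌊(β k - τ k * Spart τ β k) / (2 * π)⌋ : ℤ)
      = τ k * ∑' n, ε (n + (k + 1)) := by
    have h1 := hexact k
    have h2 := hS (k + 1)
    rw [h2] at h1
    push_cast
    rw [hdecomp]
    linear_combination h1
  rw [hmain]
  have hub : τ k * ∑' n, ε (n + (k + 1)) ≤ π / τ k ^ 4 := by
    have h1 : τ k * ∑' n, ε (n + (k + 1)) ≤ τ k * (4 * π / τ (k + 1)) :=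
      mul_le_mul_of_nonneg_left htail_le (hτpos k).le
    have h2 : τ k * (4 * π / τ (k + 1)) ≤ π / τ k ^ 4 := by
      have he : τ k * (4 * π / τ (k + 1)) = τ k * (4 * π) / τ (k + 1) := by ring
      rw [he, div_le_div_iff₀ (hτpos (k+1)) (pow_pos (hτpos k) 4)]
      nlinarith [mul_lt_mul_of_pos_left (hgrow k) hπ, mul_pos hπ (pow_pos (hτpos k) 5),
        pow_pos (hτpos k) 5]
    linarith
  have hpos : 0 ≤ τ k * ∑' n, ε (n + (k + 1)) :=
    mul_nonneg (hτpos k).le htail_nonneg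
  rw [abs_of_nonneg hpos]
  have hrw : (τ k) ^ (-4 : ℝ) = (τ k ^ 4)⁻¹ := by
    rw [Real.rpow_neg (hτpos k).le]
    norm_num
  rw [hrw]
  rw [div_eq_mul_inv] at hub
  exact hub
end
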